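/- Let v_1, …, v_r be vectors in ℝ^n (indices taken modulo r, r ≥ 1) and let w ∈ ℝ^n. Suppose there exist positive reals a_1, …, a_r and b_1, …, b_r such that w = -b_i v_i + a_i v_{i+1} for every i ∈ {1, …, r}. Then w and v_1 are linearly dependent. -/

import Mathlib

/-- If `w = -bᵢ • vᵢ + aᵢ • v_{i+1}` (indices mod `r`, `r ≥ 1`) with all
`aᵢ, bᵢ > 0`, then `w` and `v₁` are linearly dependent. -/
theorem stmt_2 {n r : ℕ} [NeZero r] (v : Fin r → (Fin n → ℝ))
    (w : Fin n → ℝ) (a b : Fin r → ℝ)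
    (ha : ∀ i, 0 < a i) (hb : ∀ i, 0 < b i)
    (hw : ∀ i : Fin r, w = -(b i) • v i + (a i) • v (i + 1)) :
    ¬ LinearIndependent ℝ ![w, v 0] := by
  open Fin.NatCast in
  have key : ∀ k : ℕ, ∃ α β γ : ℝ, 0 < α ∧ 0 < γ ∧
      α • v ((k + 1 : ℕ) : Fin r) = β • v 0 + γ • w := by
    intro k
    induction k with
    | zero =>
      refine ⟨a 0, b 0, 1, ha 0, one_pos, ?_⟩
      have h := hw 0
      have : ((0 + 1 : ℕ) : Fin r) = (0 : Fin r) + 1 := by push_cast; simp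
      rw [this]
      rw [h]; module
    | succ k ih =>
      obtain ⟨α, β, γ, hα, hγ, heq⟩ := ih
      set j : Fin r := ((k + 1 : ℕ) : Fin r) with hj
      refine ⟨a j * α, b j * β, α + b j * γ, mul_pos (ha j) hα,
        add_pos hα (mul_pos (hb j) hγ), ?_⟩
      have hcast : ((k + 1 + 1 : ℕ) : Fin r) = j + 1 := by rw [hj]; push_cast; ring
      rw [hcast]
      have h := hw j
      have h2 : (a j) • v (j + 1) = w + (b j) • v j := by rw [h]; module
      calc (a j * α) • v (j + 1) = α • ((a j) • v (j + 1)) := by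
            rw [smul_smul, mul_comm]
        _ = α • w + (b j) • (α • v j) := by rw [h2]; module
        _ = α • w + (b j) • (β • v 0 + γ • w) := by rw [heq]
        _ = (b j * β) • v 0 + (α + b j * γ) • w := by module
  obtain ⟨α, β, γ, hα, hγ, heq⟩ := key (r - 1)
  have hr : (r - 1 + 1 : ℕ) = r := Nat.succ_pred_eq_of_pos (Nat.pos_of_ne_zero (NeZero.ne r))
  rw [hr, Fin.natCast_self] at heq
  have hwv : w = ((α - β) / γ) • v 0 := by
    have h1 : γ • w = (α - β) • v 0 := by
      have := heq
      rw [sub_smul]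
      rw [this]; module
    have := congrArg (fun x => γ⁻¹ • x) h1
    simpa [smul_smul, inv_mul_cancel₀ hγ.ne', div_eq_inv_mul, mul_comm] using this
  intro hli
  obtain ⟨h0, hall⟩ := linearIndependent_fin2.mp hli
  exact hall ((α - β) / γ) hwv.symm
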